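/- Let A be an n×n real matrix and D an n×n positive diagonal matrix. Then A is a semimonotone star matrix if and only if DAD^T is a semimonotone star matrix. -/

import Mathlib

/-- A is semimonotone (E₀). -/
def IsSemimonotone {n : ℕ} (A : Matrix (Fin n) (Fin n) ℝ) : Prop :=
  ∀ x : Fin n → ℝ, 0 ≤ x → x ≠ 0 → ∃ i, 0 < x i ∧ 0 ≤ A.mulVec x i

/-- A is semimonotone star (E₀ˢ). -/
def IsSemimonotoneStar {n : ℕ} (A : Matrix (Fin n) (Fin n) ℝ) : Prop :=
  IsSemimonotone A ∧
    ∀ x : Fin n → ℝ, 0 ≤ x → 0 ≤ A.mulVec x → dotProduct x (A.mulVec x) = 0 →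
      A.transpose.mulVec x ≤ 0

lemma isDiag_eq_diagonal {n : ℕ} {D : Matrix (Fin n) (Fin n) ℝ} (hD : D.IsDiag) :
    D = Matrix.diagonal (fun i => D i i) := by
  ext i j
  by_cases h : i = j
  · subst h; simp
  · simp [Matrix.diagonal, h, hD h]

lemma diag_conj_mulVec {n : ℕ} (A : Matrix (Fin n) (Fin n) ℝ) (d : Fin n → ℝ)
    (x : Fin n → ℝ) (i : Fin n) :
    (Matrix.diagonal d * A * Matrix.diagonal d).mulVec x i =
      d i * A.mulVec (fun j => d j * x j) i := by
  simp [Matrix.mulVec, dotProduct, Matrix.mul_apply, Matrix.diagonal_apply,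
    Finset.mul_sum, Finset.sum_mul]
  exact Finset.sum_congr rfl fun k _ => by ring

lemma aux_mono {n : ℕ} (A D : Matrix (Fin n) (Fin n) ℝ)
    (hD : D.IsDiag) (hDpos : ∀ i, 0 < D i i)
    (h : IsSemimonotoneStar A) : IsSemimonotoneStar (D * A * D.transpose) := by
  obtain ⟨h1, h2⟩ := h
  set d : Fin n → ℝ := fun i => D i i with hd
  have hDdiag : D = Matrix.diagonal d := isDiag_eq_diagonal hD
  have hDt : D.transpose = Matrix.diagonal d := by rw [hDdiag, Matrix.diagonal_transpose]
  have key : ∀ x : Fin n → ℝ, ∀ i, (D * A * D.transpose).mulVec x i =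
      d i * A.mulVec (fun j => d j * x j) i := by
    intro x i
    rw [hDt, hDdiag]
    exact diag_conj_mulVec A d x i
  have keyT : ∀ x : Fin n → ℝ, ∀ i, (D * A * D.transpose).transpose.mulVec x i =
      d i * A.transpose.mulVec (fun j => d j * x j) i := by
    intro x i
    have hT : (D * A * D.transpose).transpose =
        Matrix.diagonal d * A.transpose * Matrix.diagonal d := by
      rw [hDdiag, Matrix.transpose_mul, Matrix.transpose_mul, Matrix.transpose_transpose,
        Matrix.diagonal_transpose, Matrix.mul_assoc]
    rw [hT]
    exact diag_conj_mulVec A.transpose d x i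
  constructor
  · intro x hx hx0
    set y : Fin n → ℝ := fun j => d j * x j with hy
    have hy0 : 0 ≤ y := fun j => mul_nonneg (hDpos j).le (hx j)
    have hyne : y ≠ 0 := by
      intro hc
      apply hx0
      funext j
      have := congrFun hc j
      simp [hy] at this
      rcases this with h' | h'
      · exact absurd h' (hDpos j).ne'
      · exact h'
    obtain ⟨i, hyi, hAyi⟩ := h1 y hy0 hyne
    refine ⟨i, ?_, ?_⟩
    · have hdi : 0 < d i := hDpos i
      simp only [hy] at hyi
      nlinarith [hx i]
    · rw [key x i]
      exact mul_nonneg (hDpos i).le hAyi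
  · intro x hx hAx hdot
    set y : Fin n → ℝ := fun j => d j * x j with hy
    have hy0 : 0 ≤ y := fun j => mul_nonneg (hDpos j).le (hx j)
    have hAy : 0 ≤ A.mulVec y := by
      intro i
      have h' := hAx i
      rw [key x i] at h'
      simp only [Pi.zero_apply] at h' ⊢
      exact nonneg_of_mul_nonneg_right h' (hDpos i)
    have hdot' : dotProduct y (A.mulVec y) = 0 := by
      rw [← hdot]
      simp only [dotProduct]
      apply Finset.sum_congr rfl
      intro i _
      rw [key x i]
      simp [hy]
      ring
    have hle := h2 y hy0 hAy hdot'
    intro i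
    rw [keyT x i]
    simp only [Pi.zero_apply]
    have := hle i
    simp only [Pi.zero_apply] at this
    exact mul_nonpos_of_nonneg_of_nonpos (hDpos i).le this

theorem stmt1 {n : ℕ} (A D : Matrix (Fin n) (Fin n) ℝ)
    (hD : D.IsDiag) (hDpos : ∀ i, 0 < D i i) :
    IsSemimonotoneStar A ↔ IsSemimonotoneStar (D * A * D.transpose) := by
  constructor
  · exact aux_mono A D hD hDpos
  · intro h
    set e : Fin n → ℝ := fun i => (D i i)⁻¹ with he
    set E : Matrix (Fin n) (Fin n) ℝ := Matrix.diagonal e with hE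
    have hEdiag : E.IsDiag := Matrix.isDiag_diagonal e
    have hEpos : ∀ i, 0 < E i i := by
      intro i
      simp only [hE, Matrix.diagonal_apply_eq, he]
      exact inv_pos.mpr (hDpos i)
    have hDdiag : D = Matrix.diagonal (fun i => D i i) := isDiag_eq_diagonal hD
    have hED : E * D = 1 := by
      rw [hE, hDdiag, Matrix.diagonal_mul_diagonal]
      have h1 : (fun i => e i * D i i) = fun _ => (1 : ℝ) :=
        funext fun i => by simp [he, inv_mul_cancel₀ (hDpos i).ne']
      rw [h1, ← Matrix.diagonal_one]
    have hconj : E * (D * A * D.transpose) * E.transpose = A := by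
      have hDtEt : D.transpose * E.transpose = 1 := by
        rw [← Matrix.transpose_mul, hED, Matrix.transpose_one]
      calc E * (D * A * D.transpose) * E.transpose
          = (E * D) * A * (D.transpose * E.transpose) := by
            simp only [Matrix.mul_assoc]
        _ = A := by rw [hED, hDtEt, Matrix.one_mul, Matrix.mul_one]
    have := aux_mono (D * A * D.transpose) E hEdiag hEpos h
    rwa [hconj] at this
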